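/- Let f : ℝⁿ → ℝ be a multivariate quartic polynomial (a polynomial of total degree at most 4), with n ≥ 1. Then for every x ∈ ℝⁿ and t > 0, μ_f(x,t) = f(x) + (t²/6)·Σ_{i=1}^n f_{ii}(x) + ((1/120)·Σ_{i=1}^n f_{iiii} + (1/36)·Σ_{1≤i<j≤n} f_{iijj})·t⁴, where f_{ii} := ∂²f/∂x_i², f_{iiii} := ∂⁴f/∂x_i⁴ and f_{iijj} := ∂⁴f/∂x_i²∂x_j² (the fourth-order partial derivatives of a quartic polynomial are constants). -/

import Mathlib

open MeasureTheory Matrix Filter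

/-- Partial derivative of `f` in the `i`-th coordinate direction. -/
noncomputable def pd {n : ℕ} (i : Fin n) (f : (Fin n → ℝ) → ℝ) : (Fin n → ℝ) → ℝ :=
  fun x => fderiv ℝ f x (Pi.single i 1)

/-- The gradient of `f` at `x`, as a vector of first partial derivatives. -/
noncomputable def grad {n : ℕ} (f : (Fin n → ℝ) → ℝ) (x : Fin n → ℝ) : Fin n → ℝ :=
  fun i => pd i f x

/-- The Hessian matrix of `f` at `x`, of second partial derivatives. -/
noncomputable def hess {n : ℕ} (f : (Fin n → ℝ) → ℝ) (x : Fin n → ℝ) :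
    Matrix (Fin n) (Fin n) ℝ :=
  Matrix.of fun i j => pd i (pd j f) x

/-- The Steklov function `μ_f(x,t) = (1/(2t)^n) ∫_{x-t}^{x+t} ⋯ ∫ f`. -/
noncomputable def steklov {n : ℕ} (f : (Fin n → ℝ) → ℝ) (x : Fin n → ℝ) (t : ℝ) : ℝ :=
  (1 / (2 * t) ^ n) * ∫ τ in Set.univ.pi (fun i => Set.Icc (x i - t) (x i + t)), f τ

/-- `f` is a multivariate quartic polynomial: a polynomial of total degree at most 4. -/
def IsMQP {n : ℕ} (f : (Fin n → ℝ) → ℝ) : Prop :=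
  ∃ P : MvPolynomial (Fin n) ℝ, P.totalDegree ≤ 4 ∧ ∀ x, f x = MvPolynomial.eval x P

/-- The closed Euclidean (ℓ₂) ball of radius `L` centered at `0` in `ℝⁿ`. -/
def ball2 {n : ℕ} (L : ℝ) : Set (Fin n → ℝ) := {y | ∑ i, (y i) ^ 2 ≤ L ^ 2}

/-- The Euclidean (ℓ₂) norm of a vector. -/
noncomputable def l2norm {m : ℕ} (v : Fin m → ℝ) : ℝ := Real.sqrt (∑ i, (v i) ^ 2)


open MvPolynomial in
lemma hasFDerivAt_eval_mv {n : ℕ} (P : MvPolynomial (Fin n) ℝ) (x : Fin n → ℝ) :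
    HasFDerivAt (fun y => eval y P)
      (∑ i, eval x (pderiv i P) • (ContinuousLinearMap.proj i : (Fin n → ℝ) →L[ℝ] ℝ)) x := by
  induction P using MvPolynomial.induction_on with
  | C a =>
      simp only [pderiv_C, map_zero, zero_smul, Finset.sum_const_zero, eval_C]
      exact hasFDerivAt_const a x
  | add p q hp hq =>
      simp only [map_add, add_smul, Finset.sum_add_distrib]
      exact hp.add hq
  | mul_X p j hp =>
      have h1 : HasFDerivAt (fun y : Fin n → ℝ => y j)
          (ContinuousLinearMap.proj j : (Fin n → ℝ) →L[ℝ] ℝ) x :=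
        (ContinuousLinearMap.proj (R := ℝ) (φ := fun _ : Fin n => ℝ) j).hasFDerivAt
      have h2 := hp.mul h1
      have hfun : (fun y => eval y (p * X j)) = fun y : Fin n → ℝ => eval y p * y j := by
        funext y; simp
      rw [hfun]
      refine h2.congr_fderiv (Eq.symm ?_)
      ext v
      simp only [ContinuousLinearMap.add_apply, ContinuousLinearMap.smul_apply,
        ContinuousLinearMap.sum_apply, ContinuousLinearMap.proj_apply, pderiv_mul, pderiv_X,
        map_add, _root_.map_mul, eval_X, smul_eq_mul, Pi.single_apply]
      rw [Finset.sum_congr rfl (fun i _ => show _ = x j * (eval x (pderiv i p) * v i)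
            + (if j = i then eval x p else 0) * v i by
          by_cases h : j = i <;> simp [h] <;> ring)]
      rw [Finset.sum_add_distrib, ← Finset.mul_sum]
      rw [Finset.sum_congr rfl (fun i _ => show (if j = i then eval x p else 0) * v i
            = if j = i then eval x p * v i else 0 by by_cases h : j = i <;> simp [h])]
      rw [Finset.sum_ite_eq Finset.univ j (fun i => eval x p * v i)]
      simp [add_comm]


lemma prod_expand {n : ℕ} (A D : Fin n → ℝ)
    (h3 : ∀ i j k : Fin n, i ≠ j → i ≠ k → j ≠ k → D i * D j * D k = 0)
    (s : Finset (Fin n)) :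
    ∏ i ∈ s, (A i + D i)
      = ∏ i ∈ s, A i + ∑ i ∈ s, D i * ∏ j ∈ s.erase i, A j
        + ∑ i ∈ s, ∑ j ∈ s.filter (fun j => i < j),
            D i * D j * ∏ k ∈ (s.erase i).erase j, A k := by
  induction s using Finset.induction_on_max with
  | empty => simp
  | insert a s ha ih =>
      have has : a ∉ s := fun h => lt_irrefl a (ha a h)
      rw [Finset.prod_insert has, ih]
      have e1 : ∏ i ∈ insert a s, A i = A a * ∏ i ∈ s, A i := Finset.prod_insert has
      have e2 : ∑ i ∈ insert a s, D i * ∏ j ∈ (insert a s).erase i, A j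
          = D a * ∏ j ∈ s, A j
            + ∑ i ∈ s, D i * (A a * ∏ j ∈ s.erase i, A j) := by
        rw [Finset.sum_insert has, Finset.erase_insert has]
        congr 1
        refine Finset.sum_congr rfl fun i hi => ?_
        have hia : a ≠ i := fun h => has (h ▸ hi)
        rw [Finset.erase_insert_of_ne hia,
          Finset.prod_insert (fun h => has (Finset.mem_of_mem_erase h))]
      have e3 : ∑ i ∈ insert a s, ∑ j ∈ (insert a s).filter (fun j => i < j),
            D i * D j * ∏ k ∈ ((insert a s).erase i).erase j, A k
          = ∑ i ∈ s, D i * D a * ∏ k ∈ s.erase i, A k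
            + ∑ i ∈ s, ∑ j ∈ s.filter (fun j => i < j),
                D i * D j * (A a * ∏ k ∈ (s.erase i).erase j, A k) := by
        rw [Finset.sum_insert has]
        have ha0 : ((insert a s).filter (fun j => a < j)) = ∅ := by
          apply Finset.filter_false_of_mem
          intro j hj
          rcases Finset.mem_insert.mp hj with h | h
          · simp [h]
          · exact not_lt.mpr (le_of_lt (ha j h))
        rw [ha0, Finset.sum_empty, zero_add, ← Finset.sum_add_distrib]
        refine Finset.sum_congr rfl fun i hi => ?_
        have hia : a ≠ i := fun h => has (h ▸ hi)
        have hfi : (insert a s).filter (fun j => i < j) = insert a (s.filter (fun j => i < j)) := by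
          rw [Finset.filter_insert, if_pos (ha i hi)]
        rw [hfi, Finset.sum_insert (fun h => has (Finset.mem_of_mem_filter a h))]
        congr 1
        · rw [Finset.erase_insert_of_ne hia, Finset.erase_insert
            (fun h => has (Finset.mem_of_mem_erase h))]
        · refine Finset.sum_congr rfl fun j hj => ?_
          have hjs : j ∈ s := Finset.mem_of_mem_filter j hj
          have hja : a ≠ j := fun h => has (h ▸ hjs)
          rw [Finset.erase_insert_of_ne hia, Finset.erase_insert_of_ne hja,
            Finset.prod_insert (fun h => has (Finset.mem_of_mem_erase (Finset.mem_of_mem_erase h)))]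
      rw [e1, e2, e3]
      have hz : D a * (∑ i ∈ s, ∑ j ∈ s.filter (fun j => i < j),
          D i * D j * ∏ k ∈ (s.erase i).erase j, A k) = 0 := by
        rw [Finset.mul_sum]
        refine Finset.sum_eq_zero fun i hi => ?_
        rw [Finset.mul_sum]
        refine Finset.sum_eq_zero fun j hj => ?_
        have hij : i < j := (Finset.mem_filter.mp hj).2
        have hia : a ≠ i := fun h => has (h ▸ hi)
        have hja : a ≠ j := fun h => has (h ▸ Finset.mem_of_mem_filter j hj)
        calc D a * (D i * D j * ∏ k ∈ (s.erase i).erase j, A k)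
            = (D a * D i * D j) * ∏ k ∈ (s.erase i).erase j, A k := by ring
          _ = 0 := by rw [h3 a i j hia hja (ne_of_lt hij), zero_mul]
      have c1 : ∑ i ∈ s, D i * (A a * ∏ j ∈ s.erase i, A j)
          = A a * ∑ i ∈ s, D i * ∏ j ∈ s.erase i, A j := by
        rw [Finset.mul_sum]; exact Finset.sum_congr rfl fun i _ => by ring
      have c2 : ∑ i ∈ s, ∑ j ∈ s.filter (fun j => i < j),
            D i * D j * (A a * ∏ k ∈ (s.erase i).erase j, A k)
          = A a * ∑ i ∈ s, ∑ j ∈ s.filter (fun j => i < j),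
              D i * D j * ∏ k ∈ (s.erase i).erase j, A k := by
        rw [Finset.mul_sum]
        refine Finset.sum_congr rfl fun i _ => ?_
        rw [Finset.mul_sum]
        exact Finset.sum_congr rfl fun j _ => by ring
      have c3 : ∑ i ∈ s, D i * D a * ∏ k ∈ s.erase i, A k
          = D a * ∑ i ∈ s, D i * ∏ j ∈ s.erase i, A j := by
        rw [Finset.mul_sum]; exact Finset.sum_congr rfl fun i _ => by ring
      rw [c1, c2, c3]
      linear_combination hz

open MeasureTheory in

lemma J_eval (d : ℕ) (hd : d ≤ 4) (a t : ℝ) (ht : 0 < t) :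
    ∫ s in Set.Icc (a - t) (a + t), s ^ d
      = 2 * t * (a ^ d + ((d * (d - 1) : ℕ) : ℝ) / 6 * a ^ (d - 2) * t ^ 2
          + ((d * (d - 1) * (d - 2) * (d - 3) : ℕ) : ℝ) / 120 * a ^ (d - 4) * t ^ 4) := by
  have hle : a - t ≤ a + t := by linarith
  rw [MeasureTheory.integral_Icc_eq_integral_Ioc,
    ← intervalIntegral.integral_of_le hle, integral_pow]
  interval_cases d <;> norm_num <;> ring

lemma box_integral {n : ℕ} (v : Fin n → ℕ) (x : Fin n → ℝ) (t : ℝ) :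
    ∫ τ in Set.univ.pi (fun i => Set.Icc (x i - t) (x i + t)), ∏ i, (τ i) ^ (v i)
      = ∏ i, ∫ s in Set.Icc (x i - t) (x i + t), s ^ (v i) := by
  have hms : MeasurableSet (Set.univ.pi (fun i : Fin n => Set.Icc (x i - t) (x i + t))) :=
    MeasurableSet.univ_pi fun i => measurableSet_Icc
  rw [← MeasureTheory.integral_indicator hms]
  have : (Set.univ.pi (fun i : Fin n => Set.Icc (x i - t) (x i + t))).indicator
        (fun τ => ∏ i, (τ i) ^ (v i))
      = fun τ => ∏ i, (Set.Icc (x i - t) (x i + t)).indicator (fun s => s ^ (v i)) (τ i) := by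
    funext τ
    by_cases h : τ ∈ Set.univ.pi (fun i : Fin n => Set.Icc (x i - t) (x i + t))
    · rw [Set.indicator_of_mem h]
      refine Finset.prod_congr rfl fun i _ => ?_
      rw [Set.indicator_of_mem (h i (Set.mem_univ i))]
    · rw [Set.indicator_of_notMem h]
      rw [Set.mem_univ_pi] at h
      push_neg at h
      obtain ⟨i, hi⟩ := h
      exact (Finset.prod_eq_zero (Finset.mem_univ i)
        (by rw [Set.indicator_of_notMem hi])).symm
  rw [this, MeasureTheory.volume_pi, MeasureTheory.integral_fintype_prod_eq_prod (ι := Fin n)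
    (fun i s => (Set.Icc (x i - t) (x i + t)).indicator (fun s => s ^ (v i)) s)]
  exact Finset.prod_congr rfl fun i _ => MeasureTheory.integral_indicator measurableSet_Icc

open MvPolynomial

lemma eval_pd2 {n : ℕ} (v : Fin n →₀ ℕ) (c : ℝ) (x : Fin n → ℝ) (i : Fin n) :
    eval x (pderiv i (pderiv i (monomial v c)))
      = c * ((v i * (v i - 1) : ℕ) : ℝ) * (x i) ^ (v i - 2)
          * ∏ j ∈ Finset.univ.erase i, (x j) ^ (v j) := by
  simp only [pderiv_monomial, eval_monomial, Finsupp.prod_pow, Finsupp.tsub_apply,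
    Finsupp.single_apply]
  rw [← Finset.mul_prod_erase Finset.univ _ (Finset.mem_univ i),
    Finset.prod_congr rfl (fun j hj => by
      rw [if_neg (fun h : i = j => (Finset.ne_of_mem_erase hj) h.symm)])]
  simp only [if_pos rfl, Nat.sub_sub, Nat.sub_zero]
  norm_num
  push_cast
  ring

lemma eval_pd4 {n : ℕ} (v : Fin n →₀ ℕ) (c : ℝ) (x : Fin n → ℝ) (i : Fin n) :
    eval x (pderiv i (pderiv i (pderiv i (pderiv i (monomial v c)))))
      = c * ((v i * (v i - 1) * (v i - 2) * (v i - 3) : ℕ) : ℝ) * (x i) ^ (v i - 4)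
          * ∏ j ∈ Finset.univ.erase i, (x j) ^ (v j) := by
  simp only [pderiv_monomial, eval_monomial, Finsupp.prod_pow, Finsupp.tsub_apply,
    Finsupp.single_apply]
  rw [← Finset.mul_prod_erase Finset.univ _ (Finset.mem_univ i),
    Finset.prod_congr rfl (fun j hj => by
      rw [if_neg (fun h : i = j => (Finset.ne_of_mem_erase hj) h.symm)])]
  simp only [if_pos rfl, Nat.sub_sub, Nat.sub_zero]
  norm_num
  push_cast
  ring

lemma eval_pd22 {n : ℕ} (v : Fin n →₀ ℕ) (c : ℝ) (x : Fin n → ℝ) (i j : Fin n) (hij : i ≠ j) :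
    eval x (pderiv i (pderiv i (pderiv j (pderiv j (monomial v c)))))
      = c * ((v i * (v i - 1) : ℕ) : ℝ) * ((v j * (v j - 1) : ℕ) : ℝ)
          * (x i) ^ (v i - 2) * (x j) ^ (v j - 2)
          * ∏ k ∈ (Finset.univ.erase i).erase j, (x k) ^ (v k) := by
  simp only [pderiv_monomial, eval_monomial, Finsupp.prod_pow, Finsupp.tsub_apply,
    Finsupp.single_apply]
  rw [← Finset.mul_prod_erase Finset.univ _ (Finset.mem_univ i),
    ← Finset.mul_prod_erase (Finset.univ.erase i) _
      (Finset.mem_erase.mpr ⟨hij.symm, Finset.mem_univ j⟩),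
    Finset.prod_congr rfl (fun k hk => by
      rw [if_neg (fun h : i = k =>
            (Finset.ne_of_mem_erase (Finset.mem_of_mem_erase hk)) h.symm),
          if_neg (fun h : j = k => (Finset.ne_of_mem_erase hk) h.symm)])]
  simp only [if_pos rfl, if_neg hij, if_neg (Ne.symm hij), Nat.sub_sub, Nat.sub_zero]
  norm_num
  push_cast
  ring

open MeasureTheory in
lemma mono_key {n : ℕ} (v : Fin n →₀ ℕ) (hv : ∑ i, v i ≤ 4) (c : ℝ)
    (x : Fin n → ℝ) (t : ℝ) (ht : 0 < t) :
    (1 / (2 * t) ^ n) * (∫ τ in Set.univ.pi (fun i => Set.Icc (x i - t) (x i + t)),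
        eval τ (monomial v c))
      = eval x (monomial v c)
        + (t ^ 2 / 6) * (∑ i, eval x (pderiv i (pderiv i (monomial v c))))
        + ((1 / 120) * (∑ i, eval x (pderiv i (pderiv i (pderiv i (pderiv i (monomial v c))))))
            + (1 / 36) * (∑ i, ∑ j ∈ Finset.univ.filter (fun j => i < j),
                eval x (pderiv i (pderiv i (pderiv j (pderiv j (monomial v c))))))) * t ^ 4 := by
  classical
  set A : Fin n → ℝ := fun i => x i ^ v i with hA
  set p2 : Fin n → ℝ := fun i => ((v i * (v i - 1) : ℕ) : ℝ) / 6 * x i ^ (v i - 2) with hp2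
  set p4 : Fin n → ℝ := fun i =>
    ((v i * (v i - 1) * (v i - 2) * (v i - 3) : ℕ) : ℝ) / 120 * x i ^ (v i - 4) with hp4
  set D : Fin n → ℝ := fun i => p2 i * t ^ 2 + p4 i * t ^ 4 with hD
  -- degree bookkeeping
  have hvi : ∀ i, v i ≤ 4 := fun i =>
    le_trans (Finset.single_le_sum (f := fun i => v i) (fun _ _ => Nat.zero_le _)
      (Finset.mem_univ i)) hv
  have hpair : ∀ i j : Fin n, i ≠ j → v i + v j ≤ 4 := by
    intro i j hij
    have hsub : ({i, j} : Finset (Fin n)) ⊆ Finset.univ := Finset.subset_univ _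
    have := Finset.sum_le_sum_of_subset (f := fun i => v i) hsub
    rw [Finset.sum_insert (by simp [hij]), Finset.sum_singleton] at this
    exact le_trans this hv
  have hz : ∀ i, v i ≤ 1 → p2 i = 0 ∧ p4 i = 0 := by
    intro i hi
    have h1 : v i - 1 = 0 := by omega
    constructor <;> simp [hp2, hp4, h1]
  have hD0 : ∀ i, v i ≤ 1 → D i = 0 := by
    intro i hi
    rw [hD]
    simp only [(hz i hi).1, (hz i hi).2, zero_mul, add_zero]
  have h3 : ∀ i j k : Fin n, i ≠ j → i ≠ k → j ≠ k → D i * D j * D k = 0 := by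
    intro i j k hij hik hjk
    have : v i ≤ 1 ∨ v j ≤ 1 ∨ v k ≤ 1 := by
      by_contra h
      push_neg at h
      have hsub : ({i, j, k} : Finset (Fin n)) ⊆ Finset.univ := Finset.subset_univ _
      have hq := Finset.sum_le_sum_of_subset (f := fun i => v i) hsub
      rw [Finset.sum_insert (by simp [hij, hik]), Finset.sum_insert (by simp [hjk]),
        Finset.sum_singleton] at hq
      have hq2 := le_trans hq hv
      omega
    rcases this with h | h | h
    · rw [hD0 i h, zero_mul, zero_mul]
    · rw [hD0 j h, mul_zero, zero_mul]
    · rw [hD0 k h, mul_zero]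
  have hF2 : ∀ i j : Fin n, i ≠ j → D i * D j = p2 i * p2 j * t ^ 4 := by
    intro i j hij
    by_cases hi : v i ≤ 1
    · rw [hD0 i hi, (hz i hi).1, zero_mul, zero_mul, zero_mul]
    by_cases hj : v j ≤ 1
    · rw [hD0 j hj, (hz j hj).1, mul_zero, mul_zero, zero_mul]
    push_neg at hi hj
    have hij4 := hpair i j hij
    have hvi2 : v i = 2 := by omega
    have hvj2 : v j = 2 := by omega
    have h4i : p4 i = 0 := by simp [hp4, hvi2]
    have h4j : p4 j = 0 := by simp [hp4, hvj2]
    simp only [hD, h4i, h4j, zero_mul, add_zero]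
    ring
  -- LHS computation
  have hLHS : (1 / (2 * t) ^ n) * (∫ τ in Set.univ.pi
        (fun i => Set.Icc (x i - t) (x i + t)), eval τ (monomial v c))
      = c * ∏ i, (A i + D i) := by
    simp only [eval_monomial, Finsupp.prod_pow]
    rw [MeasureTheory.integral_const_mul, box_integral (fun i => v i) x t]
    rw [Finset.prod_congr rfl (fun i _ => J_eval (v i) (hvi i) (x i) t ht)]
    rw [Finset.prod_mul_distrib, Finset.prod_const, Finset.card_univ, Fintype.card_fin]
    have h2t : (2 * t) ^ n ≠ 0 := pow_ne_zero _ (by linarith)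
    rw [Finset.prod_congr rfl (fun i _ => show
      A i + ((v i * (v i - 1) : ℕ) : ℝ) / 6 * x i ^ (v i - 2) * t ^ 2
        + ((v i * (v i - 1) * (v i - 2) * (v i - 3) : ℕ) : ℝ) / 120 * x i ^ (v i - 4) * t ^ 4
      = A i + D i by simp only [hD, hp2, hp4]; ring)]
    field_simp
  rw [hLHS]
  -- RHS computation
  rw [prod_expand A D h3 Finset.univ]
  rw [eval_monomial, Finsupp.prod_pow]
  rw [Finset.sum_congr rfl (fun i _ => eval_pd2 v c x i),
    Finset.sum_congr rfl (fun i _ => eval_pd4 v c x i)]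
  rw [Finset.sum_congr rfl (fun i _ => Finset.sum_congr rfl (fun j hj =>
    eval_pd22 v c x i j (ne_of_lt (Finset.mem_filter.mp hj).2)))]
  -- turn the double sum over D into p2 products
  rw [Finset.sum_congr rfl (fun i _ => Finset.sum_congr rfl (fun j hj => show
    D i * D j * ∏ k ∈ (Finset.univ.erase i).erase j, A k
      = p2 i * p2 j * t ^ 4 * ∏ k ∈ (Finset.univ.erase i).erase j, A k by
    rw [hF2 i j (ne_of_lt (Finset.mem_filter.mp hj).2)]))]
  -- expand single D sum
  rw [Finset.sum_congr rfl (fun i _ => show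
    D i * ∏ j ∈ Finset.univ.erase i, A j
      = p2 i * (∏ j ∈ Finset.univ.erase i, A j) * t ^ 2
        + p4 i * (∏ j ∈ Finset.univ.erase i, A j) * t ^ 4 by simp only [hD]; ring)]
  rw [Finset.sum_add_distrib]
  -- now express everything in terms of three sums and finish by ring
  have e2 : ∑ i, c * ((v i * (v i - 1) : ℕ) : ℝ) * (x i) ^ (v i - 2)
        * ∏ j ∈ Finset.univ.erase i, (x j) ^ (v j)
      = 6 * c * ∑ i, p2 i * (∏ j ∈ Finset.univ.erase i, A j) := by
    rw [Finset.mul_sum]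
    refine Finset.sum_congr rfl fun i _ => ?_
    rw [hp2, hA]
    ring
  have e4 : ∑ i, c * ((v i * (v i - 1) * (v i - 2) * (v i - 3) : ℕ) : ℝ) * (x i) ^ (v i - 4)
        * ∏ j ∈ Finset.univ.erase i, (x j) ^ (v j)
      = 120 * c * ∑ i, p4 i * (∏ j ∈ Finset.univ.erase i, A j) := by
    rw [Finset.mul_sum]
    refine Finset.sum_congr rfl fun i _ => ?_
    rw [hp4, hA]
    ring
  have e22 : ∑ i, ∑ j ∈ Finset.univ.filter (fun j => i < j),
        c * ((v i * (v i - 1) : ℕ) : ℝ) * ((v j * (v j - 1) : ℕ) : ℝ)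
          * (x i) ^ (v i - 2) * (x j) ^ (v j - 2)
          * ∏ k ∈ (Finset.univ.erase i).erase j, (x k) ^ (v k)
      = 36 * c * ∑ i, ∑ j ∈ Finset.univ.filter (fun j => i < j),
          p2 i * p2 j * ∏ k ∈ (Finset.univ.erase i).erase j, A k := by
    rw [Finset.mul_sum]
    refine Finset.sum_congr rfl fun i _ => ?_
    rw [Finset.mul_sum]
    refine Finset.sum_congr rfl fun j _ => ?_
    rw [hp2, hA]
    ring
  rw [e2, e4, e22]
  have e22' : ∑ i, ∑ j ∈ Finset.univ.filter (fun j => i < j),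
        p2 i * p2 j * t ^ 4 * ∏ k ∈ (Finset.univ.erase i).erase j, A k
      = t ^ 4 * ∑ i, ∑ j ∈ Finset.univ.filter (fun j => i < j),
          p2 i * p2 j * ∏ k ∈ (Finset.univ.erase i).erase j, A k := by
    rw [Finset.mul_sum]
    refine Finset.sum_congr rfl fun i _ => ?_
    rw [Finset.mul_sum]
    exact Finset.sum_congr rfl fun j _ => by ring
  rw [e22']
  rw [← Finset.sum_mul, ← Finset.sum_mul]
  ring

lemma pd_eval {n : ℕ} (P : MvPolynomial (Fin n) ℝ) (i : Fin n) :
    pd i (fun y => eval y P) = fun x => eval x (pderiv i P) := by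
  funext x
  rw [pd, (hasFDerivAt_eval_mv P x).fderiv]
  simp only [ContinuousLinearMap.sum_apply, ContinuousLinearMap.smul_apply,
    ContinuousLinearMap.proj_apply, Pi.single_apply, smul_eq_mul]
  rw [Finset.sum_congr rfl (fun k _ => show eval x (pderiv k P) * (if k = i then (1:ℝ) else 0)
        = if k = i then eval x (pderiv k P) else 0 by by_cases h : k = i <;> simp [h])]
  simp

open MeasureTheory in
def stmt {n : ℕ} (x : Fin n → ℝ) (t : ℝ) (Q : MvPolynomial (Fin n) ℝ) : Prop :=
  (1 / (2 * t) ^ n) * (∫ τ in Set.univ.pi (fun i => Set.Icc (x i - t) (x i + t)), eval τ Q)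
    = eval x Q + (t ^ 2 / 6) * (∑ i, eval x (pderiv i (pderiv i Q)))
      + ((1 / 120) * (∑ i, eval x (pderiv i (pderiv i (pderiv i (pderiv i Q)))))
          + (1 / 36) * (∑ i, ∑ j ∈ Finset.univ.filter (fun j => i < j),
              eval x (pderiv i (pderiv i (pderiv j (pderiv j Q)))))) * t ^ 4

lemma integrableOn_eval {n : ℕ} (Q : MvPolynomial (Fin n) ℝ) (x : Fin n → ℝ) (t : ℝ) :
    IntegrableOn (fun τ => eval τ Q)
      (Set.univ.pi (fun i => Set.Icc (x i - t) (x i + t))) volume :=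
  ((MvPolynomial.continuous_eval Q).locallyIntegrable).integrableOn_isCompact
    (isCompact_univ_pi fun i => isCompact_Icc)

lemma stmt_zero {n : ℕ} (x : Fin n → ℝ) (t : ℝ) : stmt x t (0 : MvPolynomial (Fin n) ℝ) := by
  simp [stmt]

lemma stmt_add {n : ℕ} {x : Fin n → ℝ} {t : ℝ} {Q₁ Q₂ : MvPolynomial (Fin n) ℝ}
    (h1 : stmt x t Q₁) (h2 : stmt x t Q₂) : stmt x t (Q₁ + Q₂) := by
  unfold stmt at *
  simp only [map_add]
  rw [integral_add (integrableOn_eval Q₁ x t) (integrableOn_eval Q₂ x t)]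
  simp only [Finset.sum_add_distrib]
  linear_combination h1 + h2

lemma key_aux {n : ℕ} (x : Fin n → ℝ) (t : ℝ) (ht : 0 < t) (φ : (Fin n →₀ ℕ) → ℝ)
    (s : Finset (Fin n →₀ ℕ)) (hs : ∀ v ∈ s, ∑ i, v i ≤ 4) :
    stmt x t (∑ v ∈ s, monomial v (φ v)) := by
  classical
  induction s using Finset.induction_on with
  | empty => simpa using stmt_zero x t
  | insert a s hns ih =>
      rw [Finset.sum_insert hns]
      exact stmt_add (mono_key _ (hs _ (Finset.mem_insert_self _ _)) _ x t ht)
        (ih fun v hv => hs v (Finset.mem_insert_of_mem hv))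

lemma key {n : ℕ} (P : MvPolynomial (Fin n) ℝ) (hdeg : P.totalDegree ≤ 4)
    (x : Fin n → ℝ) (t : ℝ) (ht : 0 < t) : stmt x t P := by
  have h : ∀ v ∈ P.support, ∑ i, v i ≤ 4 := by
    intro v hv
    have := le_trans (MvPolynomial.le_totalDegree hv) hdeg
    rwa [Finsupp.sum_fintype _ _ (fun _ => rfl)] at this
  rw [P.as_sum]
  exact key_aux x t ht _ _ h


/-- **Steklov Polynomial.** For a multivariate quartic polynomial `f : ℝⁿ → ℝ` (`n ≥ 1`),
`μ_f(x,t) = f(x) + (t²/6) Σᵢ f_{ii}(x) + ((1/120) Σᵢ f_{iiii} + (1/36) Σ_{i<j} f_{iijj}) t⁴`. -/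
theorem steklov_multivariate_quartic {n : ℕ} (hn : 1 ≤ n)
    (f : (Fin n → ℝ) → ℝ) (hf : IsMQP f) (x : Fin n → ℝ) (t : ℝ) (ht : 0 < t) :
    steklov f x t
      = f x + (t ^ 2 / 6) * (∑ i, pd i (pd i f) x)
        + ((1 / 120) * (∑ i, pd i (pd i (pd i (pd i f))) x)
            + (1 / 36) * (∑ i, ∑ j ∈ Finset.univ.filter (fun j => i < j),
                pd i (pd i (pd j (pd j f))) x)) * t ^ 4 := by
  obtain ⟨P, hdeg, hfe⟩ := hf
  have hfun : f = fun y => eval y P := funext hfe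
  rw [hfun]
  simp only [pd_eval]
  exact key P hdeg x t ht
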